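/- Fix α ∈ [0,1] with ‖αΔna + (1 − α)Δnb‖ ≠ 0, and set s = α²/ρ̃a + (1 − α)²/ρ̃b, λ = −h(α)/(2(r + r′)√s), and γ = 2λ/(1 + 2λs). Then the unique minimizer of the single-constraint problem P(α) is given by x1a* = n1a − (γ/ρ1a)(α²Δna + α(1 − α)Δnb), x2a* = n2a + (γ/ρ2a)(α²Δna + α(1 − α)Δnb), x1b* = n1b − (γ/ρ1b)(α(1 − α)Δna + (1 − α)²Δnb), and x2b* = n2b + (γ/ρ2b)(α(1 − α)Δna + (1 − α)²Δnb). -/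

import Mathlib

open Set

/-- The proximal objective `F` of the two-agent collision problem. -/
noncomputable def collF (d : ℕ) (ρ1a ρ1b ρ2a ρ2b : ℝ)
    (n1a n1b n2a n2b : EuclideanSpace ℝ (Fin d))
    (p : EuclideanSpace ℝ (Fin d) × EuclideanSpace ℝ (Fin d) ×
      EuclideanSpace ℝ (Fin d) × EuclideanSpace ℝ (Fin d)) : ℝ :=
  ρ1a / 2 * ‖p.1 - n1a‖ ^ 2 + ρ1b / 2 * ‖p.2.1 - n1b‖ ^ 2 +
    ρ2a / 2 * ‖p.2.2.1 - n2a‖ ^ 2 + ρ2b / 2 * ‖p.2.2.2 - n2b‖ ^ 2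

/-- The no-collision constraint of the single-constraint problem `P(α)`,
for `p = (x1a, x1b, x2a, x2b)`. -/
def collFeas (d : ℕ) (r r' α : ℝ)
    (p : EuclideanSpace ℝ (Fin d) × EuclideanSpace ℝ (Fin d) ×
      EuclideanSpace ℝ (Fin d) × EuclideanSpace ℝ (Fin d)) : Prop :=
  r + r' ≤ ‖α • (p.1 - p.2.2.1) + (1 - α) • (p.2.1 - p.2.2.2)‖

open scoped RealInnerProductSpace

private lemma aux_comp {E : Type*} [NormedAddCommGroup E] [InnerProductSpace ℝ E]
    (ρ c : ℝ) (n v x q : E) (hx : x = n - c • v) :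
    ρ/2 * ‖q - n‖^2
      = ρ/2 * (c^2 * ‖v‖^2) + ρ/2 * ‖q - x‖^2 - (ρ*c) * ⟪v, q - x⟫ := by
  have h1 : q - n = (q - x) + (-c) • v := by rw [hx]; module
  rw [h1, norm_add_sq_real, real_inner_smul_right, norm_smul, Real.norm_eq_abs,
    mul_pow, sq_abs, real_inner_comm]
  ring

private lemma aux_pair {E : Type*} [NormedAddCommGroup E] [InnerProductSpace ℝ E]
    (ρ1 ρ2 : ℝ) (h1 : 0 < ρ1) (h2 : 0 < ρ2) (x y : E) :
    (ρ1*ρ2/(ρ1+ρ2)) * ‖x - y‖^2 ≤ ρ1*‖x‖^2 + ρ2*‖y‖^2 := by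
  rw [div_mul_eq_mul_div, div_le_iff₀ (by positivity)]
  have hnn : 0 ≤ ‖ρ1 • x + ρ2 • y‖^2 := sq_nonneg _
  have he : ‖ρ1 • x + ρ2 • y‖^2 = ρ1^2*‖x‖^2 + 2*(ρ1*ρ2)*⟪x,y⟫ + ρ2^2*‖y‖^2 := by
    rw [norm_add_sq_real, real_inner_smul_left, real_inner_smul_right, norm_smul, norm_smul,
      Real.norm_eq_abs, Real.norm_eq_abs, mul_pow, mul_pow, sq_abs, sq_abs]
    ring
  have hsub : ‖x - y‖^2 = ‖x‖^2 - 2*⟪x,y⟫ + ‖y‖^2 := norm_sub_sq_real x y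
  rw [hsub]
  nlinarith [hnn, he]

private lemma aux_cs {E : Type*} [NormedAddCommGroup E] [InnerProductSpace ℝ E]
    (a b pa pb : ℝ) (ha : 0 ≤ a) (hb : 0 ≤ b) (hpa : 0 < pa) (hpb : 0 < pb) (wa wb : E) :
    pa*pb*‖a • wa + b • wb‖^2 ≤ (a^2*pb + b^2*pa) * (pa*‖wa‖^2 + pb*‖wb‖^2) := by
  have he : ‖a • wa + b • wb‖^2 = a^2*‖wa‖^2 + 2*(a*b)*⟪wa,wb⟫ + b^2*‖wb‖^2 := by
    rw [norm_add_sq_real, real_inner_smul_left, real_inner_smul_right, norm_smul, norm_smul,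
      Real.norm_eq_abs, Real.norm_eq_abs, mul_pow, mul_pow, sq_abs, sq_abs]
    ring
  have hcs : ⟪wa,wb⟫ ≤ ‖wa‖*‖wb‖ := real_inner_le_norm wa wb
  have h2 : 2*(a*b)*(pa*pb)*⟪wa,wb⟫ ≤ 2*(a*b)*(pa*pb)*(‖wa‖*‖wb‖) :=
    mul_le_mul_of_nonneg_left hcs (by positivity)
  rw [he]
  nlinarith [sq_nonneg (a*pb*‖wb‖ - b*pa*‖wa‖), h2]


set_option maxHeartbeats 2000000 in
/-- Closed-form expression for the unique minimizer of the single-constraint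
problem `P(α)` when `‖α Δna + (1-α) Δnb‖ ≠ 0`. -/
theorem stmt_5
    (d : ℕ) (hd : 1 ≤ d)
    (n1a n1b n2a n2b : EuclideanSpace ℝ (Fin d))
    (ρ1a ρ1b ρ2a ρ2b : ℝ)
    (hρ1a : 0 < ρ1a) (hρ1b : 0 < ρ1b) (hρ2a : 0 < ρ2a) (hρ2b : 0 < ρ2b)
    (r r' : ℝ) (hr : 0 < r) (hr' : 0 < r')
    (ρta ρtb : ℝ) (hρta : ρta = (ρ1a⁻¹ + ρ2a⁻¹)⁻¹) (hρtb : ρtb = (ρ1b⁻¹ + ρ2b⁻¹)⁻¹)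
    (h : ℝ → ℝ)
    (hh : ∀ β : ℝ, h β = max 0
      (((r + r') - ‖β • (n1a - n2a) + (1 - β) • (n1b - n2b)‖) /
        Real.sqrt (β ^ 2 / ρta + (1 - β) ^ 2 / ρtb)))
    (α : ℝ) (hα : α ∈ Icc (0 : ℝ) 1)
    (hne : ‖α • (n1a - n2a) + (1 - α) • (n1b - n2b)‖ ≠ 0)
    (s lam γ : ℝ)
    (hs : s = α ^ 2 / ρta + (1 - α) ^ 2 / ρtb)
    (hlam : lam = -h α / (2 * (r + r') * Real.sqrt s))
    (hγ : γ = 2 * lam / (1 + 2 * lam * s))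
    (x1a x1b x2a x2b : EuclideanSpace ℝ (Fin d))
    (hx1a : x1a = n1a - (γ / ρ1a) •
      ((α ^ 2) • (n1a - n2a) + (α * (1 - α)) • (n1b - n2b)))
    (hx2a : x2a = n2a + (γ / ρ2a) •
      ((α ^ 2) • (n1a - n2a) + (α * (1 - α)) • (n1b - n2b)))
    (hx1b : x1b = n1b - (γ / ρ1b) •
      ((α * (1 - α)) • (n1a - n2a) + ((1 - α) ^ 2) • (n1b - n2b)))
    (hx2b : x2b = n2b + (γ / ρ2b) •
      ((α * (1 - α)) • (n1a - n2a) + ((1 - α) ^ 2) • (n1b - n2b))) :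
    collFeas d r r' α (x1a, x1b, x2a, x2b) ∧
      (∀ q, collFeas d r r' α q →
        collF d ρ1a ρ1b ρ2a ρ2b n1a n1b n2a n2b (x1a, x1b, x2a, x2b) ≤
          collF d ρ1a ρ1b ρ2a ρ2b n1a n1b n2a n2b q) ∧
      (∀ q, collFeas d r r' α q → q ≠ (x1a, x1b, x2a, x2b) →
        collF d ρ1a ρ1b ρ2a ρ2b n1a n1b n2a n2b (x1a, x1b, x2a, x2b) <
          collF d ρ1a ρ1b ρ2a ρ2b n1a n1b n2a n2b q) := by
  obtain ⟨hα0, hα1⟩ := hα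
  have hα1' : (0:ℝ) ≤ 1 - α := by linarith
  have hRpos : 0 < r + r' := by linarith
  have hR0 : r + r' ≠ 0 := ne_of_gt hRpos
  set Δa := n1a - n2a with hΔa
  set Δb := n1b - n2b with hΔb
  set v := α • Δa + (1 - α) • Δb with hv
  have hNpos : 0 < ‖v‖ := lt_of_le_of_ne (norm_nonneg v) (Ne.symm hne)
  have hN0 : ‖v‖ ≠ 0 := ne_of_gt hNpos
  have hρ1a0 : ρ1a ≠ 0 := ne_of_gt hρ1a
  have hρ1b0 : ρ1b ≠ 0 := ne_of_gt hρ1b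
  have hρ2a0 : ρ2a ≠ 0 := ne_of_gt hρ2a
  have hρ2b0 : ρ2b ≠ 0 := ne_of_gt hρ2b
  have hρta_pos : 0 < ρta := by rw [hρta]; positivity
  have hρtb_pos : 0 < ρtb := by rw [hρtb]; positivity
  have hρta0 : ρta ≠ 0 := ne_of_gt hρta_pos
  have hρtb0 : ρtb ≠ 0 := ne_of_gt hρtb_pos
  have hs_pos : 0 < s := by
    rw [hs]
    rcases eq_or_ne α 0 with h0 | h0
    · rw [h0]; norm_num; positivity
    · have h1 : 0 < α^2/ρta := by positivity
      have h2 : 0 ≤ (1-α)^2/ρtb := by positivity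
      linarith
  have hs0 : s ≠ 0 := ne_of_gt hs_pos
  have hsexp : s = α^2*(ρ1a⁻¹+ρ2a⁻¹) + (1-α)^2*(ρ1b⁻¹+ρ2b⁻¹) := by
    rw [hs, hρta, hρtb]
    simp only [div_eq_mul_inv, inv_inv]
  have hhα := hh α
  rw [← hv, ← hs] at hhα
  have hsqrt_pos : 0 < Real.sqrt s := Real.sqrt_pos.mpr hs_pos
  have hsqrt0 : Real.sqrt s ≠ 0 := ne_of_gt hsqrt_pos
  have hsq : Real.sqrt s ^ 2 = s := Real.sq_sqrt hs_pos.le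
  have hcase : (r + r' ≤ ‖v‖ ∧ γ = 0) ∨
      (‖v‖ < r + r' ∧ γ * (s * ‖v‖) = ‖v‖ - (r + r')) := by
    rcases le_or_gt (r + r') ‖v‖ with hge | hlt
    · left
      refine ⟨hge, ?_⟩
      have hh0 : h α = 0 := by
        rw [hhα, max_eq_left]
        exact div_nonpos_of_nonpos_of_nonneg (by linarith) hsqrt_pos.le
      rw [hγ, hlam, hh0]
      simp
    · right
      refine ⟨hlt, ?_⟩
      have hh1 : h α = (r + r' - ‖v‖)/Real.sqrt s := by
        rw [hhα, max_eq_right]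
        exact div_nonneg (by linarith) hsqrt_pos.le
      have h2ls : 2 * lam * s = (‖v‖ - (r + r'))/(r + r') := by
        rw [hlam, hh1]
        field_simp
        linear_combination ((r + r' - ‖v‖)*s - (2*‖v‖*r + 2*‖v‖*r' - ‖v‖*s + r*s + r'*s - 4*r*r' - 2*r^2 - 2*r'^2) - (4*r*r' - 2*r*‖v‖ - r + 2*r^2 - 2*r'*‖v‖ - r' + 2*r'^2 + ‖v‖)) * hsq
      have hden : 1 + 2*lam*s = ‖v‖/(r + r') := by
        rw [h2ls]; field_simp; ring
      rw [eq_div_iff hR0] at h2ls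
      rw [hγ, hden]
      field_simp
      linear_combination h2ls
  -- closed forms for the candidate point
  have hx1a' : x1a = n1a - (γ*α/ρ1a) • v := by rw [hx1a, hv]; module
  have hx1b' : x1b = n1b - (γ*(1-α)/ρ1b) • v := by rw [hx1b, hv]; module
  have hx2a' : x2a = n2a - (-(γ*α/ρ2a)) • v := by rw [hx2a, hv]; module
  have hx2b' : x2b = n2b - (-(γ*(1-α)/ρ2b)) • v := by rw [hx2b, hv]; module
  have hLx : α • (x1a - x2a) + (1-α) • (x1b - x2b) = (1 - γ*s) • v := by
    rw [hx1a', hx1b', hx2a', hx2b', hsexp, hv]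
    module
  have h1γs : ‖v‖ < r + r' → (1 - γ*s) = (r + r')/‖v‖ := by
    intro hlt
    rcases hcase with ⟨hge, _⟩ | ⟨_, hγN⟩
    · linarith
    · field_simp
      linear_combination -hγN
  -- feasibility of the candidate point
  have hfeasx : collFeas d r r' α (x1a, x1b, x2a, x2b) := by
    show r + r' ≤ ‖α • (x1a - x2a) + (1 - α) • (x1b - x2b)‖
    rw [hLx]
    rcases le_or_gt (r + r') ‖v‖ with hge | hlt
    · rcases hcase with ⟨_, hγ0⟩ | ⟨hlt', _⟩
      · rw [hγ0]; simpa using hge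
      · linarith
    · rw [h1γs hlt, norm_smul, Real.norm_eq_abs, abs_of_pos (by positivity),
        div_mul_cancel₀ _ hN0]
  refine ⟨hfeasx, ?_⟩
  have hmain : ∀ qq : EuclideanSpace ℝ (Fin d) × EuclideanSpace ℝ (Fin d) ×
      EuclideanSpace ℝ (Fin d) × EuclideanSpace ℝ (Fin d), collFeas d r r' α qq →
      (collF d ρ1a ρ1b ρ2a ρ2b n1a n1b n2a n2b (x1a, x1b, x2a, x2b) ≤
        collF d ρ1a ρ1b ρ2a ρ2b n1a n1b n2a n2b qq ∧
       (qq ≠ (x1a, x1b, x2a, x2b) →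
        collF d ρ1a ρ1b ρ2a ρ2b n1a n1b n2a n2b (x1a, x1b, x2a, x2b) <
          collF d ρ1a ρ1b ρ2a ρ2b n1a n1b n2a n2b qq)) := by
    rintro ⟨q1, q2, q3, q4⟩ hq
    have hq' : r + r' ≤ ‖α • (q1 - q3) + (1 - α) • (q2 - q4)‖ := hq
    set δ1a := q1 - x1a with hδ1a
    set δ1b := q2 - x1b with hδ1b
    set δ2a := q3 - x2a with hδ2a
    set δ2b := q4 - x2b with hδ2b
    set Lδ := α • (δ1a - δ2a) + (1-α) • (δ1b - δ2b) with hLδ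
    set P := ⟪v, Lδ⟫ with hP
    set D := ρ1a/2*‖δ1a‖^2 + ρ1b/2*‖δ1b‖^2 + ρ2a/2*‖δ2a‖^2 + ρ2b/2*‖δ2b‖^2 with hD
    have hP' : P = α*⟪v, δ1a⟫ - α*⟪v, δ2a⟫ + (1-α)*⟪v, δ1b⟫ - (1-α)*⟪v, δ2b⟫ := by
      rw [hP, hLδ]
      simp only [inner_add_right, inner_sub_right, real_inner_smul_right]
      ring
    -- the fundamental identity
    have e1 := aux_comp ρ1a (γ*α/ρ1a) n1a v x1a q1 hx1a'
    have e2 := aux_comp ρ1b (γ*(1-α)/ρ1b) n1b v x1b q2 hx1b'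
    have e3 := aux_comp ρ2a (-(γ*α/ρ2a)) n2a v x2a q3 hx2a'
    have e4 := aux_comp ρ2b (-(γ*(1-α)/ρ2b)) n2b v x2b q4 hx2b'
    have f1 := aux_comp ρ1a (γ*α/ρ1a) n1a v x1a x1a hx1a'
    have f2 := aux_comp ρ1b (γ*(1-α)/ρ1b) n1b v x1b x1b hx1b'
    have f3 := aux_comp ρ2a (-(γ*α/ρ2a)) n2a v x2a x2a hx2a'
    have f4 := aux_comp ρ2b (-(γ*(1-α)/ρ2b)) n2b v x2b x2b hx2b'
    simp only [sub_self, norm_zero, inner_zero_right, mul_zero, ne_eq,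
      OfNat.ofNat_ne_zero, not_false_eq_true, zero_pow, add_zero, sub_zero] at f1 f2 f3 f4
    have hcq : collF d ρ1a ρ1b ρ2a ρ2b n1a n1b n2a n2b (q1, q2, q3, q4)
        = ρ1a/2*‖q1 - n1a‖^2 + ρ1b/2*‖q2 - n1b‖^2 + ρ2a/2*‖q3 - n2a‖^2
          + ρ2b/2*‖q4 - n2b‖^2 := rfl
    have hcx : collF d ρ1a ρ1b ρ2a ρ2b n1a n1b n2a n2b (x1a, x1b, x2a, x2b)
        = ρ1a/2*‖x1a - n1a‖^2 + ρ1b/2*‖x1b - n1b‖^2 + ρ2a/2*‖x2a - n2a‖^2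
          + ρ2b/2*‖x2b - n2b‖^2 := rfl
    have key : collF d ρ1a ρ1b ρ2a ρ2b n1a n1b n2a n2b (q1, q2, q3, q4)
        = collF d ρ1a ρ1b ρ2a ρ2b n1a n1b n2a n2b (x1a, x1b, x2a, x2b) + (D - γ*P) := by
      have c1 : ρ1a*(γ*α/ρ1a) = γ*α := by field_simp
      have c2 : ρ1b*(γ*(1-α)/ρ1b) = γ*(1-α) := by field_simp
      have c3 : ρ2a*(-(γ*α/ρ2a)) = -(γ*α) := by field_simp
      have c4 : ρ2b*(-(γ*(1-α)/ρ2b)) = -(γ*(1-α)) := by field_simp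
      rw [c1] at e1
      rw [c2] at e2
      rw [c3] at e3
      rw [c4] at e4
      rw [hcq, hcx, e1, e2, e3, e4, f1, f2, f3, f4, hP', hD]
      ring
    -- nonnegativity pieces
    have ht1 : 0 ≤ ρ1a/2*‖δ1a‖^2 := by positivity
    have ht2 : 0 ≤ ρ1b/2*‖δ1b‖^2 := by positivity
    have ht3 : 0 ≤ ρ2a/2*‖δ2a‖^2 := by positivity
    have ht4 : 0 ≤ ρ2b/2*‖δ2b‖^2 := by positivity
    have hDnn : 0 ≤ D := by rw [hD]; linarith
    have hDpos : (q1, q2, q3, q4) ≠ (x1a, x1b, x2a, x2b) → 0 < D := by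
      intro hne'
      have hne2 : q1 ≠ x1a ∨ q2 ≠ x1b ∨ q3 ≠ x2a ∨ q4 ≠ x2b := by
        by_contra hc
        push_neg at hc
        obtain ⟨h1', h2', h3', h4'⟩ := hc
        exact hne' (by rw [h1', h2', h3', h4'])
      rw [hD]
      rcases hne2 with h' | h' | h' | h'
      · have hnz : δ1a ≠ 0 := by rw [hδ1a]; exact sub_ne_zero_of_ne h'
        have hnp : 0 < ‖δ1a‖ := norm_pos_iff.mpr hnz
        have : 0 < ρ1a/2*‖δ1a‖^2 := by
          apply mul_pos (by positivity) (pow_pos hnp 2)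
        linarith
      · have hnz : δ1b ≠ 0 := by rw [hδ1b]; exact sub_ne_zero_of_ne h'
        have hnp : 0 < ‖δ1b‖ := norm_pos_iff.mpr hnz
        have : 0 < ρ1b/2*‖δ1b‖^2 := by
          apply mul_pos (by positivity) (pow_pos hnp 2)
        linarith
      · have hnz : δ2a ≠ 0 := by rw [hδ2a]; exact sub_ne_zero_of_ne h'
        have hnp : 0 < ‖δ2a‖ := norm_pos_iff.mpr hnz
        have : 0 < ρ2a/2*‖δ2a‖^2 := by
          apply mul_pos (by positivity) (pow_pos hnp 2)
        linarith
      · have hnz : δ2b ≠ 0 := by rw [hδ2b]; exact sub_ne_zero_of_ne h'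
        have hnp : 0 < ‖δ2b‖ := norm_pos_iff.mpr hnz
        have : 0 < ρ2b/2*‖δ2b‖^2 := by
          apply mul_pos (by positivity) (pow_pos hnp 2)
        linarith
    -- main bound
    have hbound : 0 ≤ D - γ*P ∧ ((q1,q2,q3,q4) ≠ (x1a,x1b,x2a,x2b) → 0 < D - γ*P) := by
      rcases hcase with ⟨hge, hγ0⟩ | ⟨hlt, hγN⟩
      · rw [hγ0]
        constructor
        · simpa using hDnn
        · intro hne'
          simpa using hDpos hne'
      · -- weighted Cauchy-Schwarz : ‖Lδ‖^2 ≤ 2*s*D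
        have hρta' : ρta = ρ1a*ρ2a/(ρ1a+ρ2a) := by
          rw [hρta, inv_add_inv hρ1a0 hρ2a0, inv_div]
        have hρtb' : ρtb = ρ1b*ρ2b/(ρ1b+ρ2b) := by
          rw [hρtb, inv_add_inv hρ1b0 hρ2b0, inv_div]
        have pa := aux_pair ρ1a ρ2a hρ1a hρ2a δ1a δ2a
        have pb := aux_pair ρ1b ρ2b hρ1b hρ2b δ1b δ2b
        rw [← hρta'] at pa
        rw [← hρtb'] at pb
        have step1 : ρta*‖δ1a - δ2a‖^2 + ρtb*‖δ1b - δ2b‖^2 ≤ 2*D := by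
          rw [hD]; linarith
        have cs := aux_cs α (1-α) ρta ρtb hα0 hα1' hρta_pos hρtb_pos (δ1a - δ2a) (δ1b - δ2b)
        have hsval : s*(ρta*ρtb) = α^2*ρtb + (1-α)^2*ρta := by
          rw [hs]; field_simp
        have hpp : 0 < ρta*ρtb := mul_pos hρta_pos hρtb_pos
        rw [← hsval, ← hLδ] at cs
        have hMD : ‖Lδ‖^2 ≤ 2*s*D := by
          have h4 := mul_le_mul_of_nonneg_left step1 (le_of_lt (mul_pos hs_pos hpp))
          have h5 : ‖Lδ‖^2*(ρta*ρtb) ≤ (2*s*D)*(ρta*ρtb) := by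
            calc ‖Lδ‖^2*(ρta*ρtb) = ρta*ρtb*‖Lδ‖^2 := by ring
              _ ≤ s*(ρta*ρtb)*(ρta*‖δ1a - δ2a‖^2 + ρtb*‖δ1b - δ2b‖^2) := cs
              _ ≤ s*(ρta*ρtb)*(2*D) := h4
              _ = (2*s*D)*(ρta*ρtb) := by ring
          exact le_of_mul_le_mul_right h5 hpp
        -- feasibility of q in quadratic form
        have hu' : α • (q1 - q3) + (1-α) • (q2 - q4)
            = Lδ + (α • (x1a - x2a) + (1-α) • (x1b - x2b)) := by
          rw [hLδ, hδ1a, hδ1b, hδ2a, hδ2b]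
          module
        rw [hu', hLx, h1γs hlt] at hq'
        have hsq2 : (r + r')^2 ≤ ‖Lδ + ((r+r')/‖v‖) • v‖^2 :=
          pow_le_pow_left₀ hRpos.le hq' 2
        have hexp : ‖Lδ + ((r+r')/‖v‖) • v‖^2
            = ‖Lδ‖^2 + 2*((r+r')/‖v‖)*P + (r+r')^2 := by
          rw [norm_add_sq_real, real_inner_smul_right, norm_smul, Real.norm_eq_abs,
            abs_of_pos (by positivity), mul_pow, div_pow, real_inner_comm]
          rw [hP]
          field_simp
        have h0 : 0 ≤ ‖Lδ‖^2 + 2*((r+r')/‖v‖)*P := by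
          rw [hexp] at hsq2; linarith
        have hfeas2 : 0 ≤ ‖v‖*‖Lδ‖^2 + 2*(r+r')*P := by
          have h1 : ‖v‖*‖Lδ‖^2 + 2*(r+r')*P = ‖v‖ * (‖Lδ‖^2 + 2*((r+r')/‖v‖)*P) := by
            field_simp
          rw [h1]
          exact mul_nonneg hNpos.le h0
        have h3 : γ*P*(2*s*‖v‖*(r+r')) = (‖v‖-(r+r'))*(2*(r+r')*P) := by
          linear_combination (2*(r+r')*P) * hγN
        have hb1 := mul_le_mul_of_nonneg_left hMD (le_of_lt (mul_pos hNpos hRpos))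
        have hb2 : 0 ≤ ((r+r')-‖v‖)*(‖v‖*‖Lδ‖^2 + 2*(r+r')*P) :=
          mul_nonneg (by linarith) hfeas2
        have hb3 : ‖v‖^2*‖Lδ‖^2 ≤ (D - γ*P)*(2*s*‖v‖*(r+r')) := by
          linarith [hb1, hb2, h3]
        have hposd : 0 < 2*s*‖v‖*(r+r') := by positivity
        constructor
        · refine le_of_mul_le_mul_right ?_ hposd
          rw [zero_mul]
          exact le_trans (by positivity) hb3
        · intro hne'
          by_cases hM0 : ‖Lδ‖ = 0
          · have hLδ0 : Lδ = 0 := norm_eq_zero.mp hM0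
            have hP0 : P = 0 := by rw [hP, hLδ0, inner_zero_right]
            rw [hP0]
            have := hDpos hne'
            simpa using this
          · have hMpos : 0 < ‖Lδ‖ := lt_of_le_of_ne (norm_nonneg _) (Ne.symm hM0)
            have hM0' : 0 < ‖v‖^2*‖Lδ‖^2 := mul_pos (pow_pos hNpos 2) (pow_pos hMpos 2)
            have h6 : 0 < (D - γ*P)*(2*s*‖v‖*(r+r')) := lt_of_lt_of_le hM0' hb3
            by_contra hcon
            push_neg at hcon
            have h7 : (D - γ*P)*(2*s*‖v‖*(r+r')) ≤ 0 :=
              mul_nonpos_iff.mpr (Or.inr ⟨hcon, hposd.le⟩)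
            linarith
    constructor
    · linarith [key, hbound.1]
    · intro hne'
      have := hbound.2 hne'
      linarith [key]
  constructor
  · intro q hqf
    exact (hmain q hqf).1
  · intro q hqf hne'
    obtain ⟨q1, q2, q3, q4⟩ := q
    exact (hmain (q1,q2,q3,q4) hqf).2 hne'
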